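/- With the same setup, the unoccupied-outcome projector P_0 = a_κ a_κ† satisfies P_0 Ψ = β · a_{κ⊥}† a_{μ_2}† ⋯ a_{μ_N}† |0⟩, where κ⊥ = β·u − α·w is the unit vector orthogonal to κ in span(u, w). In particular ‖P_0 Ψ‖² = β² = 1 − α², and P_0 Ψ is a single Slater determinant. -/

import Mathlib

/-- A representation of the canonical anticommutation relations (CAR) over a complex
inner product space `H` of single-particle states, on a complex inner product space `F`
(the Fock space), with creation operators `cre φ` (linear in `φ`), annihilation operators
`ann φ` (antilinear in `φ`), a cyclic vacuum vector `vac` of unit norm, and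
`ann φ` adjoint to `cre φ`. -/
structure CARRep (H : Type*) [NormedAddCommGroup H] [InnerProductSpace ℂ H]
    (F : Type*) [NormedAddCommGroup F] [InnerProductSpace ℂ F] where
  cre : H →ₗ[ℂ] F →ₗ[ℂ] F
  ann : H → F →ₗ[ℂ] F
  ann_add : ∀ φ ψ, ann (φ + ψ) = ann φ + ann ψ
  ann_smul : ∀ (c : ℂ) (φ), ann (c • φ) = (starRingEnd ℂ c) • ann φ
  cre_anticomm : ∀ φ ψ, cre φ ∘ₗ cre ψ + cre ψ ∘ₗ cre φ = 0
  ann_anticomm : ∀ φ ψ, ann φ ∘ₗ ann ψ + ann ψ ∘ₗ ann φ = 0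
  mixed_anticomm : ∀ φ ψ, ann φ ∘ₗ cre ψ + cre ψ ∘ₗ ann φ = (inner ℂ φ ψ : ℂ) • LinearMap.id
  vac : F
  vac_norm : ‖vac‖ = 1
  ann_vac : ∀ φ, ann φ vac = 0
  adjoint_rel : ∀ φ x y, (inner ℂ (cre φ x) y : ℂ) = inner ℂ x (ann φ y)

namespace CARRep

variable {H : Type*} [NormedAddCommGroup H] [InnerProductSpace ℂ H]
  {F : Type*} [NormedAddCommGroup F] [InnerProductSpace ℂ F]

/-- The Slater-determinant state `a†(v 1) ⋯ a†(v N) |0⟩`. -/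
noncomputable def slater (R : CARRep H F) {N : ℕ} (v : Fin N → H) : F :=
  ((List.ofFn fun i => R.cre (v i)).prod : F →ₗ[ℂ] F) R.vac

end CARRep


namespace CARRep

variable {H : Type*} [NormedAddCommGroup H] [InnerProductSpace ℂ H]
  {F : Type*} [NormedAddCommGroup F] [InnerProductSpace ℂ F] (R : CARRep H F)

lemma ann_cre_apply (φ ψ : H) (x : F) :
    R.ann φ (R.cre ψ x) = (inner ℂ φ ψ : ℂ) • x - R.cre ψ (R.ann φ x) := by
  have h := congrArg (fun f : F →ₗ[ℂ] F => f x) (R.mixed_anticomm φ ψ)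
  simp only [LinearMap.add_apply, LinearMap.comp_apply, LinearMap.smul_apply,
    LinearMap.id_apply] at h
  exact eq_sub_of_add_eq h

lemma cre_cre_self (φ : H) (x : F) : R.cre φ (R.cre φ x) = 0 := by
  have h := congrArg (fun f : F →ₗ[ℂ] F => f x) (R.cre_anticomm φ φ)
  simp only [LinearMap.add_apply, LinearMap.comp_apply, LinearMap.zero_apply] at h
  have h2 : (2 : ℂ) • R.cre φ (R.cre φ x) = 0 := by
    rw [two_smul]; exact h
  simpa using (smul_eq_zero.mp h2).resolve_left (by norm_num)

noncomputable def stl (l : List H) : F := ((l.map R.cre).prod : F →ₗ[ℂ] F) R.vac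

lemma stl_nil : R.stl [] = R.vac := by simp [stl]

lemma stl_cons (ψ : H) (l : List H) : R.stl (ψ :: l) = R.cre ψ (R.stl l) := by
  simp [stl, List.prod_cons, Module.End.mul_apply]

lemma slater_eq_stl {N : ℕ} (v : Fin N → H) : R.slater v = R.stl (List.ofFn v) := by
  simp only [slater, stl, List.map_ofFn]
  rfl

lemma ann_stl (φ : H) (l : List H) (h : ∀ ψ ∈ l, (inner ℂ φ ψ : ℂ) = 0) :
    R.ann φ (R.stl l) = 0 := by
  induction l with
  | nil => simp [stl_nil, R.ann_vac]
  | cons ψ t ih =>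
    rw [stl_cons, ann_cre_apply, h ψ (by simp), ih (fun x hx => h x (by simp [hx]))]
    simp

lemma inner_cre_self (φ : H) (x : F) (h : R.ann φ x = 0) :
    (inner ℂ (R.cre φ x) (R.cre φ x) : ℂ) = inner ℂ φ φ * inner ℂ x x := by
  rw [R.adjoint_rel, ann_cre_apply, h, map_zero, sub_zero, inner_smul_right]

lemma inner_stl_self (l : List H) (hp : l.Pairwise fun a b => (inner ℂ a b : ℂ) = 0)
    (hn : ∀ ψ ∈ l, ‖ψ‖ = 1) : (inner ℂ (R.stl l) (R.stl l) : ℂ) = 1 := by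
  induction l with
  | nil =>
    rw [stl_nil, @inner_self_eq_norm_sq_to_K ℂ, R.vac_norm]
    norm_num
  | cons ψ t ih =>
    rw [List.pairwise_cons] at hp
    rw [stl_cons, R.inner_cre_self ψ _ (R.ann_stl ψ t hp.1),
      ih hp.2 (fun x hx => hn x (by simp [hx])),
      @inner_self_eq_norm_sq_to_K ℂ, hn ψ (by simp)]
    norm_num

end CARRep

open CARRep in
/-- Unoccupied-outcome single-mode measurement: with the same setup as the occupied case,
the projector `P₀ = a_κ a_κ†` maps the Slater determinant `Ψ` to
`β • a_{κ⊥}† a_{μ₂}† ⋯ a_{μ_N}† |0⟩`, where `κ⊥ = β u − α w`; in particular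
`‖P₀ Ψ‖² = β² = 1 − α²` and `P₀ Ψ` is again a single Slater determinant. -/
theorem P0_single_mode_on_slater {H : Type*} [NormedAddCommGroup H] [InnerProductSpace ℂ H]
    {F : Type*} [NormedAddCommGroup F] [InnerProductSpace ℂ F]
    (R : CARRep H F) {N : ℕ} (hN : 1 ≤ N) (v : Fin N → H) (hv : Orthonormal ℂ v)
    (S : Submodule ℂ H) (hS : S = Submodule.span ℂ (Set.range v))
    (κ u w : H) (hκn : ‖κ‖ = 1) (hun : ‖u‖ = 1) (hwn : ‖w‖ = 1)
    (hu : u ∈ S) (hw : w ∈ Sᗮ)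
    (α β : ℝ) (hα : 0 ≤ α) (hβ : 0 ≤ β) (hαβ : α ^ 2 + β ^ 2 = 1)
    (hκ : κ = (α : ℂ) • u + (β : ℂ) • w)
    (κperp : H) (hκperp : κperp = (β : ℂ) • u - (α : ℂ) • w)
    (μ : Fin (N - 1) → H) (hμ : Orthonormal ℂ μ) (hμS : ∀ i, μ i ∈ S)
    (hμu : ∀ i, (inner ℂ u (μ i) : ℂ) = 0)
    (hwedge : R.cre u (R.slater μ) = R.slater v)
    (P0 : F →ₗ[ℂ] F) (hP0 : P0 = R.ann κ ∘ₗ R.cre κ) :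
    P0 (R.slater v) = (β : ℂ) • R.cre κperp (R.slater μ) ∧
    ‖P0 (R.slater v)‖ ^ 2 = β ^ 2 ∧ (β : ℝ) ^ 2 = 1 - α ^ 2 := by
  -- basic inner product facts
  have huw : (inner ℂ u w : ℂ) = 0 := (Submodule.mem_orthogonal S w).mp hw u hu
  have hwu : (inner ℂ w u : ℂ) = 0 := by rw [← inner_conj_symm, huw, map_zero]
  have hwμ : ∀ i, (inner ℂ w (μ i) : ℂ) = 0 := fun i => by
    rw [← inner_conj_symm, (Submodule.mem_orthogonal S w).mp hw (μ i) (hμS i), map_zero]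
  have huu : (inner ℂ u u : ℂ) = 1 := by
    rw [@inner_self_eq_norm_sq_to_K ℂ, hun]; norm_num
  have hww : (inner ℂ w w : ℂ) = 1 := by
    rw [@inner_self_eq_norm_sq_to_K ℂ, hwn]; norm_num
  have hκκ : (inner ℂ κ κ : ℂ) = 1 := by
    rw [@inner_self_eq_norm_sq_to_K ℂ, hκn]; norm_num
  have hκκp : (inner ℂ κ κperp : ℂ) = 0 := by
    rw [hκ, hκperp]
    simp only [inner_add_left, inner_sub_right, inner_smul_left, inner_smul_right,
      huw, hwu, huu, hww, Complex.conj_ofReal]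
    ring
  have hκpκp : (inner ℂ κperp κperp : ℂ) = 1 := by
    rw [hκperp]
    simp only [inner_sub_left, inner_sub_right, inner_smul_left, inner_smul_right,
      huw, hwu, huu, hww, Complex.conj_ofReal]
    have : ((β : ℂ))^2 + (α : ℂ)^2 = 1 := by
      exact_mod_cast (by linarith : β ^ 2 + α ^ 2 = 1)
    linear_combination this
  have hκμ : ∀ i, (inner ℂ κ (μ i) : ℂ) = 0 := fun i => by
    rw [hκ]
    simp only [inner_add_left, inner_smul_left, hμu i, hwμ i, mul_zero, add_zero]
  have hκpμ : ∀ i, (inner ℂ κperp (μ i) : ℂ) = 0 := fun i => by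
    rw [hκperp]
    simp only [inner_sub_left, inner_smul_left, hμu i, hwμ i, mul_zero, sub_zero]
  -- μ-list facts
  set M := R.slater μ with hM
  have hMstl : M = R.stl (List.ofFn μ) := R.slater_eq_stl μ
  have hannM : ∀ φ : H, (∀ i, (inner ℂ φ (μ i) : ℂ) = 0) → R.ann φ M = 0 := by
    intro φ hφ
    rw [hMstl]
    refine R.ann_stl φ _ ?_
    intro ψ hψ
    obtain ⟨i, rfl⟩ := List.mem_ofFn.mp hψ
    exact hφ i
  have hannκM : R.ann κ M = 0 := hannM κ hκμ
  have hannκpM : R.ann κperp M = 0 := hannM κperp hκpμ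
  have hMM : (inner ℂ M M : ℂ) = 1 := by
    rw [hMstl]
    refine R.inner_stl_self _ ?_ ?_
    · rw [List.pairwise_ofFn]
      intro i j hij
      have := orthonormal_iff_ite.mp hμ i j
      rw [if_neg hij.ne] at this
      exact this
    · intro ψ hψ
      obtain ⟨i, rfl⟩ := List.mem_ofFn.mp hψ
      exact hμ.1 i
  -- u = α κ + β κperp
  have h1 : ((α : ℂ))^2 + (β : ℂ)^2 = 1 := by exact_mod_cast hαβ
  have hu_eq : (α : ℂ) • κ + (β : ℂ) • κperp = u := by
    rw [hκ, hκperp]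
    match_scalars
    · linear_combination h1
    · ring
  -- key annihilation computations
  have s1 : R.ann κ (R.cre κperp M) = 0 := by
    rw [R.ann_cre_apply, hκκp, hannκM, map_zero, zero_smul, sub_zero]
  have s2 : R.ann κ (R.cre κ (R.cre κperp M)) = R.cre κperp M := by
    rw [R.ann_cre_apply, s1, map_zero, sub_zero, hκκ, one_smul]
  have main1 : P0 (R.slater v) = (β : ℂ) • R.cre κperp M := by
    rw [hP0, LinearMap.comp_apply, ← hwedge, ← hu_eq]
    simp only [map_add, map_smul, LinearMap.add_apply, LinearMap.smul_apply,
      R.cre_cre_self, smul_zero, zero_add, s2]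
  have hXX : (inner ℂ (R.cre κperp M) (R.cre κperp M) : ℂ) = 1 := by
    rw [R.inner_cre_self _ _ hannκpM, hκpκp, hMM, one_mul]
  have hXn : ‖R.cre κperp M‖ = 1 := by
    have h3 : ‖R.cre κperp M‖ ^ 2 = 1 := by
      rw [InnerProductSpace.norm_sq_eq_re_inner (𝕜 := ℂ), hXX]
      simp
    nlinarith [norm_nonneg (R.cre κperp M)]
  refine ⟨main1, ?_, by linarith⟩
  rw [main1, norm_smul, hXn, mul_one, Complex.norm_real, Real.norm_eq_abs,
    abs_of_nonneg hβ]
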